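/- For every labeled plane tree T and every pair of distinct edges e_1, e_2 of T, the involutions φ commute: φ_{e_2}(φ_{e_1}(T)) = φ_{e_1}(φ_{e_2}(T)), where in each composite the second map is applied to the image of the corresponding edge in the intermediate tree. -/

import Mathlib

/-- A plane tree with labeled vertices: a root label together with an ordered
list of child subtrees.  (A plane tree is a rooted tree in which the children
of each node are linearly ordered.) -/
inductive LTree : Type where
  | node : ℕ → List LTree → LTree

namespace LTree

/-- The label of the root. -/
def rootLabel : LTree → ℕ
  | node a _ => a

/-- The list of child subtrees of the root. -/
def children : LTree → List LTree
  | node _ cs => cs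

/-- `deg_T(root)`: the number of children of the root. -/
def rootDeg (t : LTree) : ℕ := (children t).length

mutual
  /-- The list of all vertex labels of a tree. -/
  def labels : LTree → List ℕ
    | node a cs => a :: labelsList cs
  /-- The list of all vertex labels of a forest. -/
  def labelsList : List LTree → List ℕ
    | [] => []
    | c :: rest => labels c ++ labelsList rest
end

/-- `β(v)`: the smallest label occurring in the subtree `t` rooted at `v`. -/
def minLabel (t : LTree) : ℕ := (labels t).foldr min (rootLabel t)

/-- `min { j, β(c₁), …, β(cₖ) }` for a vertex `j` and a list of subtrees `c₁, …, cₖ`. -/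
def minOver (j : ℕ) (rest : List LTree) : ℕ := (rest.map minLabel).foldr min j

mutual
  /-- The list of edges of a tree, each recorded as a (parent label, child label)
  pair, in depth-first order. -/
  def edgeList : LTree → List (ℕ × ℕ)
    | node a cs => edgeListAux a cs
  def edgeListAux : ℕ → List LTree → List (ℕ × ℕ)
    | _, [] => []
    | a, c :: rest => (a, rootLabel c) :: (edgeList c ++ edgeListAux a rest)
end

mutual
  /-- The list of improper edges of a tree: if a vertex `j` has children
  `j₁, …, jₖ` (ordered left to right), the edge `(j, jᵢ)` is improper when
  `β(jᵢ) < min { j, β(j_{i+1}), …, β(jₖ) }`. -/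
  def improperEdges : LTree → List (ℕ × ℕ)
    | node a cs => improperEdgesAux a cs
  def improperEdgesAux : ℕ → List LTree → List (ℕ × ℕ)
    | _, [] => []
    | j, c :: rest =>
        (if minLabel c < minOver j rest then [(j, rootLabel c)] else [])
          ++ improperEdges c ++ improperEdgesAux j rest
end

mutual
  /-- The list of proper (i.e. non-improper) edges of a tree. -/
  def properEdges : LTree → List (ℕ × ℕ)
    | node a cs => properEdgesAux a cs
  def properEdgesAux : ℕ → List LTree → List (ℕ × ℕ)
    | _, [] => []
    | j, c :: rest =>
        (if minLabel c < minOver j rest then [] else [(j, rootLabel c)])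
          ++ properEdges c ++ properEdgesAux j rest
end

/-- `impr T`: the number of improper edges of `T`. -/
def impr (t : LTree) : ℕ := (improperEdges t).length

/-- `prop T`: the number of proper edges of `T`. -/
def propCount (t : LTree) : ℕ := (properEdges t).length

/-- The number of edges of `T`. -/
def edgeCount (t : LTree) : ℕ := (edgeList t).length

/-- `T` is a labeled plane tree with `n` edges: its `n + 1` vertices are labeled
bijectively with `{1, 2, …, n + 1}`. -/
def IsLPT (n : ℕ) (t : LTree) : Prop := (labels t).Perm (List.range' 1 (n + 1))

/-- `T` is increasing: vertex labels increase along every path from the root. -/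
inductive Increasing : LTree → Prop where
  | node (a : ℕ) (cs : List LTree) :
      (∀ c ∈ cs, a < rootLabel c) → (∀ c ∈ cs, Increasing c) → Increasing (node a cs)

end LTree

namespace LTree

/-- Search a list of subtrees for one whose root is labeled `j`; if found, return
the triple (subtrees to its left `A(e)`, children of the subtree rooted at `j`
i.e. `B(e)`, subtrees to its right `C(e)`). -/
def findSplit (j : ℕ) : List LTree → Option (List LTree × List LTree × List LTree)
  | [] => none
  | c :: rest =>
      if rootLabel c = j then some ([], children c, rest)
      else
        match findSplit j rest with
        | some (pre, ls, post) => some (c :: pre, ls, post)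
        | none => none

mutual
  /-- The map `φ_e` associated to the edge `e = (i, j)` of a labeled plane tree,
  where `e` is specified by the label `j` of its child endpoint (labels are
  distinct, so this determines the edge).  If the vertex `i` has children
  `k₁, …, k_{t-1}, j, k_{t+1}, …, k_p` and `j` has children `l₁, …, l_q`, then
  `{i, C(e)}` and `{j, B(e)}` are swapped: `j` takes the former position of `i`
  and has children `k₁, …, k_{t-1}, i, l₁, …, l_q`, while `i` has children
  `k_{t+1}, …, k_p`. -/
  def phi (j : ℕ) : LTree → LTree
    | node a cs =>
        match findSplit j cs with
        | some (pre, ls, post) => node j (pre ++ node a post :: ls)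
        | none => node a (phiList j cs)
  def phiList (j : ℕ) : List LTree → List LTree
    | [] => []
    | c :: rest => phi j c :: phiList j rest
end

end LTree
namespace LTree

@[simp] lemma labels_node (a : ℕ) (cs : List LTree) : labels (node a cs) = a :: labelsList cs := rfl
@[simp] lemma labelsList_nil : labelsList [] = [] := rfl
@[simp] lemma labelsList_cons (c : LTree) (l : List LTree) :
    labelsList (c :: l) = labels c ++ labelsList l := rfl
@[simp] lemma labelsList_append (l₁ l₂ : List LTree) :
    labelsList (l₁ ++ l₂) = labelsList l₁ ++ labelsList l₂ := by
  induction l₁ with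
  | nil => simp
  | cons c l ih => simp [ih]

@[simp] lemma rootLabel_node (a : ℕ) (cs : List LTree) : rootLabel (node a cs) = a := rfl
@[simp] lemma children_node (a : ℕ) (cs : List LTree) : children (node a cs) = cs := rfl

lemma rootLabel_mem_labels (t : LTree) : rootLabel t ∈ labels t := by
  cases t; simp

lemma mem_labels_of_children {x : ℕ} {t : LTree} (h : x ∈ labelsList (children t)) :
    x ∈ labels t := by cases t with | node a cs => simp at h ⊢; tauto

lemma mem_labelsList_of_mem {x : ℕ} {cs : List LTree} {c : LTree} (hc : c ∈ cs)
    (hx : x ∈ labels c) : x ∈ labelsList cs := by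
  induction cs with
  | nil => simp at hc
  | cons d rest ih =>
    rcases List.mem_cons.1 hc with rfl | hc
    · simp [hx]
    · simp [ih hc]

@[simp] lemma phiList_nil (j : ℕ) : phiList j [] = [] := rfl
@[simp] lemma phiList_cons (j : ℕ) (c : LTree) (l : List LTree) :
    phiList j (c :: l) = phi j c :: phiList j l := rfl
@[simp] lemma phiList_append (j : ℕ) (l₁ l₂ : List LTree) :
    phiList j (l₁ ++ l₂) = phiList j l₁ ++ phiList j l₂ := by
  induction l₁ with
  | nil => rfl
  | cons c l ih => simp [ih]

lemma findSplit_eq_none {j : ℕ} {cs : List LTree} (h : ∀ c ∈ cs, rootLabel c ≠ j) :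
    findSplit j cs = none := by
  induction cs with
  | nil => rfl
  | cons c rest ih =>
    rw [findSplit, if_neg (h c (by simp)), ih (fun c hc => h c (by simp [hc]))]

lemma findSplit_eq_some {j : ℕ} {pre : List LTree} (ls post : List LTree)
    (h : ∀ c ∈ pre, rootLabel c ≠ j) :
    findSplit j (pre ++ node j ls :: post) = some (pre, ls, post) := by
  induction pre with
  | nil => simp [findSplit]
  | cons c p ih =>
    rw [List.cons_append, findSplit, if_neg (h c (by simp)),
      ih (fun c hc => h c (by simp [hc]))]

lemma findSplit_decomp {j : ℕ} : ∀ {cs : List LTree} {pre ls post : List LTree},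
    findSplit j cs = some (pre, ls, post) → cs = pre ++ node j ls :: post := by
  intro cs
  induction cs with
  | nil => intro pre ls post h; simp [findSplit] at h
  | cons c rest ih =>
    intro pre ls post h
    rw [findSplit] at h
    by_cases hc : rootLabel c = j
    · rw [if_pos hc] at h
      cases c with
      | node b bs =>
        simp at hc h
        obtain ⟨rfl, rfl, rfl⟩ := h
        simp [hc]
    · rw [if_neg hc] at h
      cases hf : findSplit j rest with
      | none => rw [hf] at h; simp at h
      | some x =>
        obtain ⟨p, l, q⟩ := x
        rw [hf] at h
        simp at h
        obtain ⟨rfl, rfl, rfl⟩ := h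
        simp [ih hf]

lemma phi_node_of_none {j a : ℕ} {cs : List LTree} (h : findSplit j cs = none) :
    phi j (node a cs) = node a (phiList j cs) := by rw [phi, h]

lemma phi_node_of_some {j a : ℕ} {cs pre ls post : List LTree}
    (h : findSplit j cs = some (pre, ls, post)) :
    phi j (node a cs) = node j (pre ++ node a post :: ls) := by rw [phi, h]

lemma rootLabel_phi (j : ℕ) (t : LTree) :
    rootLabel (phi j t) = j ∨ rootLabel (phi j t) = rootLabel t := by
  cases t with
  | node a cs =>
    cases h : findSplit j cs with
    | none => rw [phi_node_of_none h]; simp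
    | some x => obtain ⟨p, l, q⟩ := x; rw [phi_node_of_some h]; simp

mutual
theorem phi_fix (j : ℕ) (t : LTree) (h : j ∉ labels t) : phi j t = t := by
  cases t with
  | node a cs =>
    have hcs : j ∉ labelsList cs := by simp at h; tauto
    have hf : findSplit j cs = none :=
      findSplit_eq_none fun c hc hr =>
        hcs (mem_labelsList_of_mem hc (hr ▸ rootLabel_mem_labels c))
    rw [phi_node_of_none hf, phiList_fix j cs hcs]
theorem phiList_fix (j : ℕ) (l : List LTree) (h : j ∉ labelsList l) : phiList j l = l := by
  cases l with
  | nil => rfl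
  | cons c rest =>
    simp only [labelsList_cons, List.mem_append, not_or] at h
    rw [phiList_cons, phi_fix j c h.1, phiList_fix j rest h.2]
end

mutual
theorem labels_phi_perm (j : ℕ) (t : LTree) : (labels (phi j t)).Perm (labels t) := by
  cases t with
  | node a cs =>
    cases h : findSplit j cs with
    | none =>
      rw [phi_node_of_none h]
      simpa using (labelsList_phiList_perm j cs).cons a
    | some x =>
      obtain ⟨p, l, q⟩ := x
      rw [phi_node_of_some h, findSplit_decomp h]
      simp only [labels_node, labelsList_append, labelsList_cons]
      refine List.perm_iff_count.2 fun x => ?_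
      simp [List.count_append, List.count_cons]
      omega
theorem labelsList_phiList_perm (j : ℕ) (l : List LTree) :
    (labelsList (phiList j l)).Perm (labelsList l) := by
  cases l with
  | nil => rfl
  | cons c rest =>
    simpa using (labels_phi_perm j c).append (labelsList_phiList_perm j rest)
end

end LTree
namespace LTree

@[simp] lemma edgeList_node (a : ℕ) (cs : List LTree) :
    edgeList (node a cs) = edgeListAux a cs := by rw [edgeList]

lemma edge_cases {i j a : ℕ} : ∀ {cs : List LTree}, (i, j) ∈ edgeListAux a cs →
    (i = a ∧ ∃ pre ls post, cs = pre ++ node j ls :: post) ∨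
    (∃ pre c post, cs = pre ++ c :: post ∧ (i, j) ∈ edgeList c) := by
  intro cs
  induction cs with
  | nil => intro h; rw [edgeListAux] at h; simp at h
  | cons c rest ih =>
    intro h
    rw [edgeListAux] at h
    rcases List.mem_cons.1 h with he | he
    · left
      obtain ⟨rfl, rfl⟩ := Prod.mk.injEq .. ▸ (by exact Prod.mk.inj he : i = a ∧ j = rootLabel c)
      refine ⟨rfl, [], children c, rest, ?_⟩
      cases c <;> simp
    · rcases List.mem_append.1 he with he | he
      · exact Or.inr ⟨[], c, rest, by simp, he⟩
      · rcases ih he with ⟨hi, pre, ls, post, hcs⟩ | ⟨pre, d, post, hcs, hd⟩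
        · exact Or.inl ⟨hi, c :: pre, ls, post, by simp [hcs]⟩
        · exact Or.inr ⟨c :: pre, d, post, by simp [hcs], hd⟩

mutual
theorem edge_snd_mem {i j : ℕ} (t : LTree) (h : (i, j) ∈ edgeList t) :
    j ∈ labelsList (children t) := by
  cases t with
  | node a cs => rw [edgeList_node] at h; simpa using edge_snd_memAux cs h
theorem edge_snd_memAux {i j a : ℕ} (cs : List LTree) (h : (i, j) ∈ edgeListAux a cs) :
    j ∈ labelsList cs := by
  cases cs with
  | nil => rw [edgeListAux] at h; simp at h
  | cons c rest =>
    rw [edgeListAux] at h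
    rcases List.mem_cons.1 h with he | he
    · have : j = rootLabel c := (Prod.mk.inj he).2
      exact mem_labelsList_of_mem (by simp) (this ▸ rootLabel_mem_labels c)
    · rcases List.mem_append.1 he with he | he
      · exact mem_labelsList_of_mem (by simp)
          (mem_labels_of_children (edge_snd_mem c he))
      · simpa using Or.inr (edge_snd_memAux rest he)
end

mutual
theorem edge_fst_mem {i j : ℕ} (t : LTree) (h : (i, j) ∈ edgeList t) : i ∈ labels t := by
  cases t with
  | node a cs =>
    rw [edgeList_node] at h
    rcases edge_fst_memAux cs h with hi | hi <;> simp [hi]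
theorem edge_fst_memAux {i j a : ℕ} (cs : List LTree) (h : (i, j) ∈ edgeListAux a cs) :
    i = a ∨ i ∈ labelsList cs := by
  cases cs with
  | nil => rw [edgeListAux] at h; simp at h
  | cons c rest =>
    rw [edgeListAux] at h
    rcases List.mem_cons.1 h with he | he
    · exact Or.inl (Prod.mk.inj he).1
    · rcases List.mem_append.1 he with he | he
      · exact Or.inr (mem_labelsList_of_mem (by simp) (edge_fst_mem c he))
      · rcases edge_fst_memAux rest he with hi | hi
        · exact Or.inl hi
        · exact Or.inr (by simp [hi])
end

lemma mem_same {x : ℕ} : ∀ {cs : List LTree}, (labelsList cs).Nodup →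
    ∀ {c c' : LTree}, c ∈ cs → c' ∈ cs → x ∈ labels c → x ∈ labels c' → c = c' := by
  intro cs
  induction cs with
  | nil => intro _ c c' hc; simp at hc
  | cons d rest ih =>
    intro hnd c c' hc hc' hx hx'
    simp only [labelsList_cons, List.nodup_append'] at hnd
    rcases List.mem_cons.1 hc with rfl | hc
    · rcases List.mem_cons.1 hc' with h' | hc'
      · rw [h']
      · exact absurd (mem_labelsList_of_mem hc' hx') (hnd.2.2 hx)
    · rcases List.mem_cons.1 hc' with h' | hc'
      · rw [h'] at hx'
        exact ((hnd.2.2 hx') (mem_labelsList_of_mem hc hx)).elim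
      · exact ih hnd.2.1 hc hc' hx hx'

lemma nodup_labels_of_mem : ∀ {cs : List LTree}, (labelsList cs).Nodup →
    ∀ {c : LTree}, c ∈ cs → (labels c).Nodup := by
  intro cs
  induction cs with
  | nil => intro _ c hc; simp at hc
  | cons d rest ih =>
    intro hnd c hc
    simp only [labelsList_cons, List.nodup_append'] at hnd
    rcases List.mem_cons.1 hc with rfl | hc
    · exact hnd.1
    · exact ih hnd.2.1 hc

lemma nodup_split {pre post : List LTree} {c : LTree}
    (h : (labelsList (pre ++ c :: post)).Nodup) :
    (labels c).Nodup ∧ (labelsList pre).Nodup ∧ (labelsList post).Nodup ∧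
      (∀ x ∈ labels c, x ∉ labelsList pre ∧ x ∉ labelsList post) ∧
      (∀ x ∈ labelsList pre, x ∉ labelsList post) := by
  rw [labelsList_append, labelsList_cons] at h
  rw [List.nodup_append', List.nodup_append'] at h
  obtain ⟨h1, ⟨h2, h3, h4⟩, h5⟩ := h
  exact ⟨h2, h1, h3, fun x hx => ⟨fun hp => h5 hp (by simp [hx]), fun hp => h4 hx hp⟩,
    fun x hx hp => h5 hx (by simp [hp])⟩

lemma two_split {α : Type*} : ∀ {p₁ : List α} {l s₁ p₂ s₂ : List α} {x y : α},
    l = p₁ ++ x :: s₁ → l = p₂ ++ y :: s₂ → p₁.length < p₂.length →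
    ∃ mid, p₂ = p₁ ++ x :: mid ∧ s₁ = mid ++ y :: s₂ := by
  intro p₁
  induction p₁ with
  | nil =>
    intro l s₁ p₂ s₂ x y h₁ h₂ hlen
    cases p₂ with
    | nil => simp at hlen
    | cons b p₂' =>
      rw [h₁] at h₂
      simp at h₂
      exact ⟨p₂', by simp [h₂.1], h₂.2⟩
  | cons a p₁' ih =>
    intro l s₁ p₂ s₂ x y h₁ h₂ hlen
    cases p₂ with
    | nil => simp at hlen
    | cons b p₂' =>
      rw [h₁] at h₂
      simp at h₂ hlen
      obtain ⟨rfl, h₂⟩ := h₂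
      obtain ⟨mid, hm1, hm2⟩ := ih rfl h₂ (by omega)
      exact ⟨mid, by simp [hm1], hm2⟩

end LTree
namespace LTree

lemma roots_ne {j : ℕ} {l : List LTree} (h : j ∉ labelsList l) :
    ∀ c ∈ l, rootLabel c ≠ j :=
  fun c hc hr => h (mem_labelsList_of_mem hc (hr ▸ rootLabel_mem_labels c))

lemma findSplit_none' {j : ℕ} {l : List LTree} (h : j ∉ labelsList l) :
    findSplit j l = none := findSplit_eq_none (roots_ne h)

lemma findSplit_some' {j : ℕ} {pre : List LTree} (ls post : List LTree)
    (h : j ∉ labelsList pre) :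
    findSplit j (pre ++ node j ls :: post) = some (pre, ls, post) :=
  findSplit_eq_some ls post (roots_ne h)

lemma phiList_seg {j : ℕ} {pre post : List LTree} (c : LTree)
    (h1 : j ∉ labelsList pre) (h2 : j ∉ labelsList post) :
    phiList j (pre ++ c :: post) = pre ++ phi j c :: post := by
  rw [phiList_append, phiList_cons, phiList_fix j pre h1, phiList_fix j post h2]

lemma caseTT {a j₁ j₂ : ℕ} (pre mid post ls₁ ls₂ : List LTree)
    (hT : (labels (node a (pre ++ node j₁ ls₁ :: (mid ++ node j₂ ls₂ :: post)))).Nodup) :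
    phi j₂ (phi j₁ (node a (pre ++ node j₁ ls₁ :: (mid ++ node j₂ ls₂ :: post))))
      = phi j₁ (phi j₂ (node a (pre ++ node j₁ ls₁ :: (mid ++ node j₂ ls₂ :: post)))) := by
  simp only [labels_node, labelsList_append, labelsList_cons, List.nodup_cons,
    List.nodup_append', List.mem_append, List.mem_cons, not_or, List.disjoint_left] at hT
  obtain ⟨⟨hap, ⟨haj₁, hal₁⟩, ham, ⟨haj₂, hal₂⟩, hapo⟩, ndp,
    ⟨⟨h1l₁, ndl₁⟩, ⟨ndm, ⟨⟨h2l₂, ndl₂⟩, ndpo, h2po⟩, hmid⟩, h1big⟩, hpre⟩ := hT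
  -- basic disjointness facts
  have h12 : j₁ ≠ j₂ := fun h => (h1big (Or.inl rfl)).2.1.1 h
  have h1p : j₁ ∉ labelsList pre := fun h => (hpre h).1.1 rfl
  have h2p : j₂ ∉ labelsList pre := fun h => (hpre h).2.2.1.1 rfl
  have h2l₁ : j₂ ∉ labelsList ls₁ := fun h => (h1big (Or.inr h)).2.1.1 rfl
  have h2m : j₂ ∉ labelsList mid := fun h => (hmid h).1.1 rfl
  have h1mid : j₁ ∉ labelsList mid := fun h => (h1big (Or.inl rfl)).1 h
  -- LHS
  have f1 : findSplit j₁ (pre ++ node j₁ ls₁ :: (mid ++ node j₂ ls₂ :: post))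
      = some (pre, ls₁, mid ++ node j₂ ls₂ :: post) := findSplit_some' _ _ h1p
  have rts : ∀ c ∈ pre ++ node a (mid ++ node j₂ ls₂ :: post) :: ls₁, rootLabel c ≠ j₂ := by
    intro c hc
    rcases List.mem_append.1 hc with h | h
    · exact roots_ne h2p c h
    rcases List.mem_cons.1 h with rfl | h
    · simpa using fun h => haj₂ h
    · exact roots_ne h2l₁ c h
  have f2 : findSplit j₂ (pre ++ node a (mid ++ node j₂ ls₂ :: post) :: ls₁) = none :=
    findSplit_eq_none rts
  have f3 : findSplit j₂ (mid ++ node j₂ ls₂ :: post) = some (mid, ls₂, post) :=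
    findSplit_some' _ _ h2m
  -- RHS
  have hcs : pre ++ node j₁ ls₁ :: (mid ++ node j₂ ls₂ :: post)
      = (pre ++ node j₁ ls₁ :: mid) ++ node j₂ ls₂ :: post := by simp
  have h2pm : j₂ ∉ labelsList (pre ++ node j₁ ls₁ :: mid) := by
    simp only [labelsList_append, labelsList_cons, labels_node, List.mem_append,
      List.mem_cons, not_or]
    exact ⟨h2p, ⟨fun h => h12 h.symm, h2l₁⟩, h2m⟩
  have g1 : findSplit j₂ ((pre ++ node j₁ ls₁ :: mid) ++ node j₂ ls₂ :: post)
      = some (pre ++ node j₁ ls₁ :: mid, ls₂, post) := findSplit_some' _ _ h2pm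
  have g2 : findSplit j₁ (pre ++ node j₁ ls₁ :: (mid ++ node a post :: ls₂))
      = some (pre, ls₁, mid ++ node a post :: ls₂) := findSplit_some' _ _ h1p
  rw [phi_node_of_some f1, phi_node_of_none f2,
    phiList_seg _ h2p h2l₁, phi_node_of_some f3, hcs, phi_node_of_some g1,
    List.append_assoc, List.cons_append, phi_node_of_some g2]

end LTree
namespace LTree

lemma ne_root_of_deep {j : ℕ} {d : LTree} (nd : (labels d).Nodup)
    (h : j ∈ labelsList (children d)) : j ≠ rootLabel d := by
  cases d with
  | node b bs =>
    simp only [labels_node, List.nodup_cons] at nd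
    simp only [children_node] at h
    rintro rfl
    exact nd.1 h

lemma not_mem_labels_phi {j x : ℕ} {t : LTree} (h : x ∉ labels t) :
    x ∉ labels (phi j t) := fun hx => h ((labels_phi_perm j t).subset hx)

lemma not_mem_labels_node {x a : ℕ} {cs : List LTree} (h1 : ¬ x = a)
    (h2 : x ∉ labelsList cs) : x ∉ labels (node a cs) := by
  simp only [labels_node, List.mem_cons, not_or]; exact ⟨h1, h2⟩

lemma caseB1a {a j₁ j₂ : ℕ} (pre post lp lp2 bs : List LTree)
    (hT : (labels (node a (pre ++ node j₁ (lp ++ node j₂ bs :: lp2) :: post))).Nodup) :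
    phi j₂ (phi j₁ (node a (pre ++ node j₁ (lp ++ node j₂ bs :: lp2) :: post)))
      = phi j₂ (phi j₂ (node a (pre ++ node j₁ (lp ++ node j₂ bs :: lp2) :: post))) := by
  simp only [labels_node, labelsList_append, labelsList_cons, List.nodup_cons,
    List.nodup_append', List.mem_append, List.mem_cons, not_or, List.disjoint_left] at hT
  obtain ⟨⟨hap, ⟨haj₁, halp, ⟨haj₂, habs⟩, halp2⟩, hapo⟩, ndp,
    ⟨⟨⟨h1lp, ⟨h12, h1bs⟩, h1lp2⟩, ndlp, ⟨⟨h2bs, ndbs⟩, ndlp2, hd2⟩, hlp⟩, ndpo, hbig⟩,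
    hpre⟩ := hT
  have h1p : j₁ ∉ labelsList pre := fun h => (hpre h).1.1 rfl
  have h2p : j₂ ∉ labelsList pre := fun h => (hpre h).1.2.2.1.1 rfl
  have h2lp : j₂ ∉ labelsList lp := fun h => (hlp h).1.1 rfl
  have h2post : j₂ ∉ labelsList post := hbig (Or.inr (Or.inr (Or.inl (Or.inl rfl))))
  have f1 : findSplit j₁ (pre ++ node j₁ (lp ++ node j₂ bs :: lp2) :: post)
      = some (pre, lp ++ node j₂ bs :: lp2, post) := findSplit_some' _ _ h1p
  have e1 : pre ++ node a post :: (lp ++ node j₂ bs :: lp2)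
      = (pre ++ node a post :: lp) ++ node j₂ bs :: lp2 := by simp
  have h2seg : j₂ ∉ labelsList (pre ++ node a post :: lp) := by
    simp only [labelsList_append, labelsList_cons, labels_node, List.mem_append,
      List.mem_cons, not_or]
    exact ⟨h2p, ⟨fun h => haj₂ h.symm, h2post⟩, h2lp⟩
  have f2 : findSplit j₂ ((pre ++ node a post :: lp) ++ node j₂ bs :: lp2)
      = some (pre ++ node a post :: lp, bs, lp2) := findSplit_some' _ _ h2seg
  have f3 : findSplit j₂ (pre ++ node j₁ (lp ++ node j₂ bs :: lp2) :: post) = none := by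
    refine findSplit_eq_none fun c hc => ?_
    rcases List.mem_append.1 hc with h | h
    · exact roots_ne h2p c h
    rcases List.mem_cons.1 h with rfl | h
    · simpa using h12
    · exact roots_ne h2post c h
  have f4 : findSplit j₂ (lp ++ node j₂ bs :: lp2) = some (lp, bs, lp2) :=
    findSplit_some' _ _ h2lp
  have f5 : findSplit j₂ (pre ++ node j₂ (lp ++ node j₁ lp2 :: bs) :: post)
      = some (pre, lp ++ node j₁ lp2 :: bs, post) := findSplit_some' _ _ h2p
  rw [phi_node_of_some f1, e1, phi_node_of_some f2, phi_node_of_none f3,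
    phiList_seg (node j₁ (lp ++ node j₂ bs :: lp2)) h2p h2post,
    phi_node_of_some f4, phi_node_of_some f5]
  simp

lemma caseB1b {a j₁ i₂ j₂ : ℕ} (pre post lp lp2 : List LTree) (d : LTree)
    (h₂ : (i₂, j₂) ∈ edgeList d)
    (hT : (labels (node a (pre ++ node j₁ (lp ++ d :: lp2) :: post))).Nodup) :
    phi j₂ (phi j₁ (node a (pre ++ node j₁ (lp ++ d :: lp2) :: post)))
      = phi j₁ (phi j₂ (node a (pre ++ node j₁ (lp ++ d :: lp2) :: post))) := by
  simp only [labels_node, labelsList_append, labelsList_cons, List.nodup_cons,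
    List.nodup_append', List.mem_append, List.mem_cons, not_or, List.disjoint_left] at hT
  obtain ⟨⟨hap, ⟨haj₁, halp, had, halp2⟩, hapo⟩, ndp,
    ⟨⟨⟨h1lp, h1d, h1lp2⟩, ndlp, ⟨ndd, ndlp2, hd2⟩, hlp⟩, ndpo, hbig⟩, hpre⟩ := hT
  have hj₂d : j₂ ∈ labels d := mem_labels_of_children (edge_snd_mem d h₂)
  have hj₂root : j₂ ≠ rootLabel d := ne_root_of_deep ndd (edge_snd_mem d h₂)
  have h1p : j₁ ∉ labelsList pre := fun h => (hpre h).1.1 rfl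
  have h2p : j₂ ∉ labelsList pre := fun h => (hpre h).1.2.2.1 hj₂d
  have h2a : ¬ j₂ = a := fun h => had (h ▸ hj₂d)
  have h21 : ¬ j₂ = j₁ := fun h => h1d (h ▸ hj₂d)
  have h2lp : j₂ ∉ labelsList lp := fun h => (hlp h).1 hj₂d
  have h2lp2 : j₂ ∉ labelsList lp2 := hd2 hj₂d
  have h2post : j₂ ∉ labelsList post := hbig (Or.inr (Or.inr (Or.inl hj₂d)))
  have f1 : findSplit j₁ (pre ++ node j₁ (lp ++ d :: lp2) :: post)
      = some (pre, lp ++ d :: lp2, post) := findSplit_some' _ _ h1p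
  have f2 : findSplit j₂ (pre ++ node a post :: (lp ++ d :: lp2)) = none := by
    refine findSplit_eq_none fun c hc => ?_
    rcases List.mem_append.1 hc with h | h
    · exact roots_ne h2p c h
    rcases List.mem_cons.1 h with rfl | h
    · simpa using fun h => h2a h.symm
    rcases List.mem_append.1 h with h | h
    · exact roots_ne h2lp c h
    rcases List.mem_cons.1 h with rfl | h
    · exact fun h => hj₂root h.symm
    · exact roots_ne h2lp2 c h
  have f3 : findSplit j₂ (pre ++ node j₁ (lp ++ d :: lp2) :: post) = none := by
    refine findSplit_eq_none fun c hc => ?_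
    rcases List.mem_append.1 hc with h | h
    · exact roots_ne h2p c h
    rcases List.mem_cons.1 h with rfl | h
    · simpa using fun h => h21 h.symm
    · exact roots_ne h2post c h
  have f4 : findSplit j₂ (lp ++ d :: lp2) = none := by
    refine findSplit_eq_none fun c hc => ?_
    rcases List.mem_append.1 hc with h | h
    · exact roots_ne h2lp c h
    rcases List.mem_cons.1 h with rfl | h
    · exact fun h => hj₂root h.symm
    · exact roots_ne h2lp2 c h
  have f5 : findSplit j₁ (pre ++ node j₁ (lp ++ phi j₂ d :: lp2) :: post)
      = some (pre, lp ++ phi j₂ d :: lp2, post) := findSplit_some' _ _ h1p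
  rw [phi_node_of_some f1, phi_node_of_none f2, phiList_append, phiList_cons,
    phiList_fix j₂ pre h2p,
    phi_fix j₂ (node a post) (not_mem_labels_node h2a h2post),
    phiList_seg d h2lp h2lp2,
    phi_node_of_none f3, phiList_seg (node j₁ (lp ++ d :: lp2)) h2p h2post,
    phi_node_of_none f4, phiList_seg d h2lp h2lp2, phi_node_of_some f5]

lemma caseB2L {a j₁ i₂ j₂ : ℕ} (pre mid post ls : List LTree) (c : LTree)
    (h₂ : (i₂, j₂) ∈ edgeList c)
    (hT : (labels (node a (pre ++ c :: (mid ++ node j₁ ls :: post)))).Nodup) :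
    phi j₂ (phi j₁ (node a (pre ++ c :: (mid ++ node j₁ ls :: post))))
      = phi j₁ (phi j₂ (node a (pre ++ c :: (mid ++ node j₁ ls :: post)))) := by
  simp only [labels_node, labelsList_append, labelsList_cons, List.nodup_cons,
    List.nodup_append', List.mem_append, List.mem_cons, not_or, List.disjoint_left] at hT
  obtain ⟨⟨hap, hac, ham, ⟨haj₁, hals⟩, hapo⟩, ndp,
    ⟨ndc, ⟨ndm, ⟨⟨h1ls, ndls⟩, ndpo, hlsbig⟩, hmid⟩, hc⟩, hpre⟩ := hT
  have hj₂c : j₂ ∈ labels c := mem_labels_of_children (edge_snd_mem c h₂)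
  have hj₂root : j₂ ≠ rootLabel c := ne_root_of_deep ndc (edge_snd_mem c h₂)
  have h2p : j₂ ∉ labelsList pre := fun h => (hpre h).1 hj₂c
  have h2m : j₂ ∉ labelsList mid := (hc hj₂c).1
  have h21 : ¬ j₂ = j₁ := (hc hj₂c).2.1.1
  have h2ls : j₂ ∉ labelsList ls := (hc hj₂c).2.1.2
  have h2post : j₂ ∉ labelsList post := (hc hj₂c).2.2
  have h2a : ¬ j₂ = a := fun h => hac (h ▸ hj₂c)
  have h1p : j₁ ∉ labelsList pre := fun h => (hpre h).2.2.1.1 rfl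
  have h1m : j₁ ∉ labelsList mid := fun h => (hmid h).1.1 rfl
  have h1c : j₁ ∉ labels c := fun h => (hc h).2.1.1 rfl
  have e1 : pre ++ c :: (mid ++ node j₁ ls :: post)
      = (pre ++ c :: mid) ++ node j₁ ls :: post := by simp
  have h1seg : j₁ ∉ labelsList (pre ++ c :: mid) := by
    simp only [labelsList_append, labelsList_cons, List.mem_append, not_or]
    exact ⟨h1p, h1c, h1m⟩
  have f1 : findSplit j₁ ((pre ++ c :: mid) ++ node j₁ ls :: post)
      = some (pre ++ c :: mid, ls, post) := findSplit_some' _ _ h1seg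
  have f2 : findSplit j₂ ((pre ++ c :: mid) ++ node a post :: ls) = none := by
    refine findSplit_eq_none fun x hx => ?_
    rcases List.mem_append.1 hx with h | h
    · rcases List.mem_append.1 h with h | h
      · exact roots_ne h2p x h
      rcases List.mem_cons.1 h with rfl | h
      · exact fun h => hj₂root h.symm
      · exact roots_ne h2m x h
    rcases List.mem_cons.1 h with rfl | h
    · simpa using fun h => h2a h.symm
    · exact roots_ne h2ls x h
  have f3 : findSplit j₂ ((pre ++ c :: mid) ++ node j₁ ls :: post) = none := by
    refine findSplit_eq_none fun x hx => ?_
    rcases List.mem_append.1 hx with h | h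
    · rcases List.mem_append.1 h with h | h
      · exact roots_ne h2p x h
      rcases List.mem_cons.1 h with rfl | h
      · exact fun h => hj₂root h.symm
      · exact roots_ne h2m x h
    rcases List.mem_cons.1 h with rfl | h
    · simpa using fun h => h21 h.symm
    · exact roots_ne h2post x h
  have f4 : findSplit j₁ ((pre ++ phi j₂ c :: mid) ++ node j₁ ls :: post)
      = some (pre ++ phi j₂ c :: mid, ls, post) := by
    refine findSplit_eq_some ls post fun x hx => ?_
    rcases List.mem_append.1 hx with h | h
    · exact roots_ne h1p x h
    rcases List.mem_cons.1 h with rfl | h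
    · rcases rootLabel_phi j₂ c with h | h
      · rw [h]; exact h21
      · rw [h]; exact fun hr => h1c (hr ▸ rootLabel_mem_labels c)
    · exact roots_ne h1m x h
  rw [e1, phi_node_of_some f1, phi_node_of_none f2, phi_node_of_none f3]
  simp only [phiList_append, phiList_cons]
  rw [phiList_fix j₂ pre h2p, phiList_fix j₂ mid h2m, phiList_fix j₂ ls h2ls,
    phiList_fix j₂ post h2post,
    phi_fix j₂ (node a post) (not_mem_labels_node h2a h2post),
    phi_fix j₂ (node j₁ ls) (not_mem_labels_node h21 h2ls),
    phi_node_of_some f4]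

lemma caseB2R {a j₁ i₂ j₂ : ℕ} (pre mid post ls : List LTree) (c : LTree)
    (h₂ : (i₂, j₂) ∈ edgeList c)
    (hT : (labels (node a (pre ++ node j₁ ls :: (mid ++ c :: post)))).Nodup) :
    phi j₂ (phi j₁ (node a (pre ++ node j₁ ls :: (mid ++ c :: post))))
      = phi j₁ (phi j₂ (node a (pre ++ node j₁ ls :: (mid ++ c :: post)))) := by
  simp only [labels_node, labelsList_append, labelsList_cons, List.nodup_cons,
    List.nodup_append', List.mem_append, List.mem_cons, not_or, List.disjoint_left] at hT
  obtain ⟨⟨hap, ⟨haj₁, hals⟩, ham, hac, hapo⟩, ndp,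
    ⟨⟨h1ls, ndls⟩, ⟨ndm, ⟨ndc, ndpo, hcpost⟩, hmid⟩, h1big⟩, hpre⟩ := hT
  have hj₂c : j₂ ∈ labels c := mem_labels_of_children (edge_snd_mem c h₂)
  have hj₂root : j₂ ≠ rootLabel c := ne_root_of_deep ndc (edge_snd_mem c h₂)
  have h2p : j₂ ∉ labelsList pre := fun h => (hpre h).2.2.1 hj₂c
  have h2m : j₂ ∉ labelsList mid := fun h => (hmid h).1 hj₂c
  have h21 : ¬ j₂ = j₁ := fun h => (h1big (Or.inl h)).2.1 hj₂c
  have h2ls : j₂ ∉ labelsList ls := fun h => (h1big (Or.inr h)).2.1 hj₂c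
  have h2post : j₂ ∉ labelsList post := hcpost hj₂c
  have h2a : ¬ j₂ = a := fun h => hac (h ▸ hj₂c)
  have h1p : j₁ ∉ labelsList pre := fun h => (hpre h).1.1 rfl
  have f1 : findSplit j₁ (pre ++ node j₁ ls :: (mid ++ c :: post))
      = some (pre, ls, mid ++ c :: post) := findSplit_some' _ _ h1p
  have f2 : findSplit j₂ (pre ++ node a (mid ++ c :: post) :: ls) = none := by
    refine findSplit_eq_none fun x hx => ?_
    rcases List.mem_append.1 hx with h | h
    · exact roots_ne h2p x h
    rcases List.mem_cons.1 h with rfl | h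
    · simpa using fun h => h2a h.symm
    · exact roots_ne h2ls x h
  have f3 : findSplit j₂ (mid ++ c :: post) = none := by
    refine findSplit_eq_none fun x hx => ?_
    rcases List.mem_append.1 hx with h | h
    · exact roots_ne h2m x h
    rcases List.mem_cons.1 h with rfl | h
    · exact fun h => hj₂root h.symm
    · exact roots_ne h2post x h
  have f4 : findSplit j₂ (pre ++ node j₁ ls :: (mid ++ c :: post)) = none := by
    refine findSplit_eq_none fun x hx => ?_
    rcases List.mem_append.1 hx with h | h
    · exact roots_ne h2p x h
    rcases List.mem_cons.1 h with rfl | h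
    · simpa using fun h => h21 h.symm
    rcases List.mem_append.1 h with h | h
    · exact roots_ne h2m x h
    rcases List.mem_cons.1 h with rfl | h
    · exact fun h => hj₂root h.symm
    · exact roots_ne h2post x h
  have f5 : findSplit j₁ (pre ++ node j₁ ls :: (mid ++ phi j₂ c :: post))
      = some (pre, ls, mid ++ phi j₂ c :: post) := findSplit_some' _ _ h1p
  rw [phi_node_of_some f1, phi_node_of_none f2, phi_node_of_none f4]
  simp only [phiList_append, phiList_cons, phi_node_of_none f3]
  rw [phiList_fix j₂ pre h2p, phiList_fix j₂ ls h2ls, phiList_fix j₂ mid h2m,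
    phiList_fix j₂ post h2post,
    phi_fix j₂ (node j₁ ls) (not_mem_labels_node h21 h2ls),
    phi_node_of_some f5]

lemma caseIIdiff {a i₁ j₁ i₂ j₂ : ℕ} (pre mid post : List LTree) (c c' : LTree)
    (h₁ : (i₁, j₁) ∈ edgeList c) (h₂ : (i₂, j₂) ∈ edgeList c')
    (hT : (labels (node a (pre ++ c :: (mid ++ c' :: post)))).Nodup) :
    phi j₂ (phi j₁ (node a (pre ++ c :: (mid ++ c' :: post))))
      = phi j₁ (phi j₂ (node a (pre ++ c :: (mid ++ c' :: post)))) := by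
  simp only [labels_node, labelsList_append, labelsList_cons, List.nodup_cons,
    List.nodup_append', List.mem_append, List.mem_cons, not_or, List.disjoint_left] at hT
  obtain ⟨⟨hap, hac, ham, hac', hapo⟩, ndp,
    ⟨ndc, ⟨ndm, ⟨ndc', ndpo, hc'post⟩, hmid⟩, hcbig⟩, hpre⟩ := hT
  have hj₁c : j₁ ∈ labels c := mem_labels_of_children (edge_snd_mem c h₁)
  have hj₁root : j₁ ≠ rootLabel c := ne_root_of_deep ndc (edge_snd_mem c h₁)
  have hj₂c' : j₂ ∈ labels c' := mem_labels_of_children (edge_snd_mem c' h₂)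
  have hj₂root : j₂ ≠ rootLabel c' := ne_root_of_deep ndc' (edge_snd_mem c' h₂)
  have h1p : j₁ ∉ labelsList pre := fun h => (hpre h).1 hj₁c
  have h1m : j₁ ∉ labelsList mid := (hcbig hj₁c).1
  have h1c' : j₁ ∉ labels c' := (hcbig hj₁c).2.1
  have h1post : j₁ ∉ labelsList post := (hcbig hj₁c).2.2
  have h2p : j₂ ∉ labelsList pre := fun h => (hpre h).2.2.1 hj₂c'
  have h2m : j₂ ∉ labelsList mid := fun h => (hmid h).1 hj₂c'
  have h2c : j₂ ∉ labels c := fun h => (hcbig h).2.1 hj₂c'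
  have h2post : j₂ ∉ labelsList post := hc'post hj₂c'
  have f1 : findSplit j₁ (pre ++ c :: (mid ++ c' :: post)) = none := by
    refine findSplit_eq_none fun x hx => ?_
    rcases List.mem_append.1 hx with h | h
    · exact roots_ne h1p x h
    rcases List.mem_cons.1 h with rfl | h
    · exact fun h => hj₁root h.symm
    rcases List.mem_append.1 h with h | h
    · exact roots_ne h1m x h
    rcases List.mem_cons.1 h with rfl | h
    · exact fun h => h1c' (h ▸ rootLabel_mem_labels x)
    · exact roots_ne h1post x h
  have f2 : findSplit j₂ (pre ++ phi j₁ c :: (mid ++ c' :: post)) = none := by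
    refine findSplit_eq_none fun x hx => ?_
    rcases List.mem_append.1 hx with h | h
    · exact roots_ne h2p x h
    rcases List.mem_cons.1 h with rfl | h
    · rcases rootLabel_phi j₁ c with h | h
      · rw [h]; exact fun h => (hcbig hj₁c).2.1 (h ▸ hj₂c')
      · rw [h]; exact fun hr => h2c (hr ▸ rootLabel_mem_labels c)
    rcases List.mem_append.1 h with h | h
    · exact roots_ne h2m x h
    rcases List.mem_cons.1 h with rfl | h
    · exact fun h => hj₂root h.symm
    · exact roots_ne h2post x h
  have f3 : findSplit j₂ (pre ++ c :: (mid ++ c' :: post)) = none := by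
    refine findSplit_eq_none fun x hx => ?_
    rcases List.mem_append.1 hx with h | h
    · exact roots_ne h2p x h
    rcases List.mem_cons.1 h with rfl | h
    · exact fun hr => h2c (hr ▸ rootLabel_mem_labels x)
    rcases List.mem_append.1 h with h | h
    · exact roots_ne h2m x h
    rcases List.mem_cons.1 h with rfl | h
    · exact fun h => hj₂root h.symm
    · exact roots_ne h2post x h
  have f4 : findSplit j₁ (pre ++ c :: (mid ++ phi j₂ c' :: post)) = none := by
    refine findSplit_eq_none fun x hx => ?_
    rcases List.mem_append.1 hx with h | h
    · exact roots_ne h1p x h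
    rcases List.mem_cons.1 h with rfl | h
    · exact fun h => hj₁root h.symm
    rcases List.mem_append.1 h with h | h
    · exact roots_ne h1m x h
    rcases List.mem_cons.1 h with rfl | h
    · rcases rootLabel_phi j₂ c' with h | h
      · rw [h]; exact fun h => h1c' (h ▸ hj₂c')
      · rw [h]; exact fun hr => h1c' (hr ▸ rootLabel_mem_labels c')
    · exact roots_ne h1post x h
  rw [phi_node_of_none f1, phi_node_of_none f3]
  simp only [phiList_append, phiList_cons]
  rw [phiList_fix j₁ pre h1p, phiList_fix j₁ mid h1m, phiList_fix j₁ post h1post,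
    phi_fix j₁ c' h1c', phiList_fix j₂ pre h2p, phiList_fix j₂ mid h2m,
    phiList_fix j₂ post h2post, phi_fix j₂ c h2c]
  rw [phi_node_of_none f2, phi_node_of_none f4]
  simp only [phiList_append, phiList_cons]
  rw [phiList_fix j₂ pre h2p, phiList_fix j₂ mid h2m, phiList_fix j₂ post h2post,
    phi_fix j₂ (phi j₁ c) (not_mem_labels_phi h2c),
    phiList_fix j₁ pre h1p, phiList_fix j₁ mid h1m, phiList_fix j₁ post h1post,
    phi_fix j₁ (phi j₂ c') (not_mem_labels_phi h1c')]

end LTree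
namespace LTree

lemma sizeOf_lt_of_mem_children {a : ℕ} {cs : List LTree} {c : LTree} (h : c ∈ cs) :
    sizeOf c < sizeOf (node a cs) := by
  have := List.sizeOf_lt_of_mem h
  simp only [node.sizeOf_spec]
  omega

lemma root_phi_of_ne {j i : ℕ} {c : LTree} (nd : (labels c).Nodup)
    (h : (i, j) ∈ edgeList c) (hi : i ≠ rootLabel c) :
    phi j c = node (rootLabel c) (phiList j (children c)) := by
  cases c with
  | node r rs =>
    rw [edgeList_node] at h
    simp only [labels_node, List.nodup_cons] at nd
    rcases edge_cases h with ⟨rfl, _, _, _, _⟩ | ⟨p, d, q, hdec, hd⟩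
    · exact absurd rfl hi
    · have hjd : j ∈ labels d := mem_labels_of_children (edge_snd_mem d hd)
      have hjr : j ≠ rootLabel d :=
        ne_root_of_deep (nodup_labels_of_mem nd.2 (hdec ▸ (by simp))) (edge_snd_mem d hd)
      have hsplit := nodup_split (hdec ▸ nd.2)
      have f : findSplit j rs = none := by
        rw [hdec]
        refine findSplit_eq_none fun x hx => ?_
        rcases List.mem_append.1 hx with hxx | hxx
        · exact roots_ne (fun hh => (hsplit.2.2.2.1 j hjd).1 hh) x hxx
        rcases List.mem_cons.1 hxx with rfl | hxx
        · exact fun hh => hjr hh.symm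
        · exact roots_ne (fun hh => (hsplit.2.2.2.1 j hjd).2 hh) x hxx
      simp only [rootLabel_node, children_node]
      exact phi_node_of_none f

theorem parent_unique : ∀ (n : ℕ) (t : LTree), sizeOf t ≤ n → (labels t).Nodup →
    ∀ {i i' j : ℕ}, (i, j) ∈ edgeList t → (i', j) ∈ edgeList t → i = i' := by
  intro n
  induction n with
  | zero =>
    intro t ht
    cases t with
    | node a cs => simp only [node.sizeOf_spec] at ht; omega
  | succ n ih =>
    intro t ht hnd i i' j h1 h2
    cases t with
    | node a cs =>
      rw [edgeList_node] at h1 h2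
      simp only [labels_node, List.nodup_cons] at hnd
      have ndcs := hnd.2
      rcases edge_cases h1 with ⟨rfl, pre, ls, post, hdec⟩ | ⟨pre, c, post, hdec, hc⟩
      · rcases edge_cases h2 with ⟨rfl, _, _, _, _⟩ | ⟨pre', c', post', hdec', hc'⟩
        · rfl
        · exfalso
          have hm1 : (node j ls) ∈ cs := hdec ▸ (by simp)
          have hm2 : c' ∈ cs := hdec' ▸ (by simp)
          have hj2 : j ∈ labels c' := mem_labels_of_children (edge_snd_mem c' hc')
          have hEq := mem_same ndcs hm1 hm2 (by simp) hj2
          have := edge_snd_mem c' hc'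
          rw [← hEq] at this
          simp only [children_node] at this
          have hndl : (labels (node j ls)).Nodup := nodup_labels_of_mem ndcs hm1
          simp only [labels_node, List.nodup_cons] at hndl
          exact hndl.1 this
      · rcases edge_cases h2 with ⟨rfl, pre', ls', post', hdec'⟩ | ⟨pre', c', post', hdec', hc'⟩
        · exfalso
          have hm1 : (node j ls') ∈ cs := hdec' ▸ (by simp)
          have hm2 : c ∈ cs := hdec ▸ (by simp)
          have hj2 : j ∈ labels c := mem_labels_of_children (edge_snd_mem c hc)
          have hEq := mem_same ndcs hm1 hm2 (by simp) hj2
          have hmem := edge_snd_mem c hc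
          rw [← hEq] at hmem
          simp only [children_node] at hmem
          have hndl : (labels (node j ls')).Nodup := nodup_labels_of_mem ndcs hm1
          simp only [labels_node, List.nodup_cons] at hndl
          exact hndl.1 hmem
        · have hm1 : c ∈ cs := hdec ▸ (by simp)
          have hm2 : c' ∈ cs := hdec' ▸ (by simp)
          have hj1 : j ∈ labels c := mem_labels_of_children (edge_snd_mem c hc)
          have hj2 : j ∈ labels c' := mem_labels_of_children (edge_snd_mem c' hc')
          have hEq := mem_same ndcs hm1 hm2 hj1 hj2
          subst hEq
          exact ih c (by have := sizeOf_lt_of_mem_children (a := a) hm1; omega)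
            (nodup_labels_of_mem ndcs hm1) hc hc'
end LTree
namespace LTree

lemma mainTI {a j₁ i₂ j₂ : ℕ} {cs : List LTree}
    (hT : (labels (node a cs)).Nodup)
    {p₁ l₁ q₁ : List LTree} (hd₁ : cs = p₁ ++ node j₁ l₁ :: q₁)
    {p₂ : List LTree} {c₂ : LTree} {q₂ : List LTree} (hd₂ : cs = p₂ ++ c₂ :: q₂)
    (hc₂ : (i₂, j₂) ∈ edgeList c₂) (hne : j₁ ≠ j₂) :
    phi j₂ (phi j₁ (node a cs)) = phi (if j₁ = i₂ then j₂ else j₁) (phi j₂ (node a cs)) := by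
  have ndcs : (labelsList cs).Nodup := by
    simp only [labels_node, List.nodup_cons] at hT; exact hT.2
  have hi₂ : i₂ ∈ labels c₂ := edge_fst_mem c₂ hc₂
  rcases Nat.lt_trichotomy p₁.length p₂.length with hlt | heq | hgt
  · obtain ⟨mid, hm1, hm2⟩ := two_split hd₁ hd₂ hlt
    have hcs : cs = p₁ ++ node j₁ l₁ :: (mid ++ c₂ :: q₂) := by rw [hd₁, hm2]
    have hsp := nodup_split (hcs ▸ ndcs)
    have hj₁ : j₁ ∉ labels c₂ := fun h =>
      (hsp.2.2.2.1 j₁ (by simp)).2 (mem_labelsList_of_mem (by simp) h)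
    rw [if_neg (fun (h : j₁ = i₂) => hj₁ (h ▸ hi₂))]
    rw [hcs] at hT ⊢
    exact caseB2R p₁ mid q₂ l₁ c₂ hc₂ hT
  · rw [hd₁] at hd₂
    obtain ⟨hp, hq⟩ := List.append_inj hd₂ heq
    obtain ⟨hc, hqq⟩ := List.cons_eq_cons.mp hq
    subst hc
    rw [edgeList_node] at hc₂
    have hsp := nodup_split (hd₁ ▸ ndcs)
    have hnl : (labels (node j₁ l₁)).Nodup := hsp.1
    simp only [labels_node, List.nodup_cons] at hnl
    rcases edge_cases hc₂ with ⟨rfl, lp, bs, lp2, hl⟩ | ⟨lp, d, lp2, hl, hd⟩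
    · rw [if_pos rfl]
      rw [hd₁, hl] at hT ⊢
      exact caseB1a p₁ q₁ lp lp2 bs hT
    · have hi₂l : i₂ ∈ labelsList l₁ :=
        mem_labelsList_of_mem (hl ▸ (by simp)) (edge_fst_mem d hd)
      rw [if_neg (fun (h : j₁ = i₂) => hnl.1 (h ▸ hi₂l))]
      rw [hd₁, hl] at hT ⊢
      exact caseB1b p₁ q₁ lp lp2 d hd hT
  · obtain ⟨mid, hm1, hm2⟩ := two_split hd₂ hd₁ hgt
    have hcs : cs = p₂ ++ c₂ :: (mid ++ node j₁ l₁ :: q₁) := by rw [hd₂, hm2]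
    have hsp := nodup_split (hcs ▸ ndcs)
    rw [if_neg (fun (h : j₁ = i₂) => (hsp.2.2.2.1 i₂ hi₂).2
      (h ▸ (show j₁ ∈ labelsList (mid ++ node j₁ l₁ :: q₁) by simp)))]
    rw [hcs] at hT ⊢
    exact caseB2L p₂ mid q₁ l₁ c₂ hc₂ hT

theorem mainAux : ∀ (n : ℕ) (T : LTree), sizeOf T ≤ n → (labels T).Nodup →
    ∀ {i₁ j₁ i₂ j₂ : ℕ}, (i₁, j₁) ∈ edgeList T → (i₂, j₂) ∈ edgeList T → j₁ ≠ j₂ →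
    phi (if j₂ = i₁ then j₁ else j₂) (phi j₁ T)
      = phi (if j₁ = i₂ then j₂ else j₁) (phi j₂ T) := by
  intro n
  induction n with
  | zero =>
    intro t ht
    cases t with
    | node a cs => simp only [node.sizeOf_spec] at ht; omega
  | succ n ih =>
    intro t ht hnd i₁ j₁ i₂ j₂ h1 h2 hne
    cases t with
    | node a cs =>
      rw [edgeList_node] at h1 h2
      have han : a ∉ labelsList cs := by
        simp only [labels_node, List.nodup_cons] at hnd; exact hnd.1
      have ndcs : (labelsList cs).Nodup := by
        simp only [labels_node, List.nodup_cons] at hnd; exact hnd.2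
      rcases edge_cases h1 with ⟨rfl, p₁, l₁, q₁, hd₁⟩ | ⟨p₁, c₁, q₁, hd₁, hc₁⟩
      · -- e₁ is a top-level edge, i₁ = a
        have hj₂a : ¬ j₂ = i₁ := fun h => han (h ▸ edge_snd_memAux cs h2)
        rw [if_neg hj₂a]
        rcases edge_cases h2 with ⟨rfl, p₂, l₂, q₂, hd₂⟩ | ⟨p₂, c₂, q₂, hd₂, hc₂⟩
        · -- both top-level
          have hj₁a : ¬ j₁ = i₂ := fun h => han (h ▸ edge_snd_memAux cs h1)
          rw [if_neg hj₁a]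
          rcases Nat.lt_trichotomy p₁.length p₂.length with hlt | heq | hgt
          · obtain ⟨mid, hm1, hm2⟩ := two_split hd₁ hd₂ hlt
            have hcs : cs = p₁ ++ node j₁ l₁ :: (mid ++ node j₂ l₂ :: q₂) := by
              rw [hd₁, hm2]
            rw [hcs] at hnd ⊢
            exact caseTT p₁ mid q₂ l₁ l₂ hnd
          · rw [hd₁] at hd₂
            obtain ⟨hp, hq⟩ := List.append_inj hd₂ heq
            obtain ⟨hc, hqq⟩ := List.cons_eq_cons.mp hq
            exact absurd (by injection hc) hne
          · obtain ⟨mid, hm1, hm2⟩ := two_split hd₂ hd₁ hgt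
            have hcs : cs = p₂ ++ node j₂ l₂ :: (mid ++ node j₁ l₁ :: q₁) := by
              rw [hd₂, hm2]
            rw [hcs] at hnd ⊢
            exact (caseTT p₂ mid q₁ l₂ l₁ hnd).symm
        · -- e₁ top, e₂ deep
          exact mainTI hnd hd₁ hd₂ hc₂ hne
      · rcases edge_cases h2 with ⟨rfl, p₂, l₂, q₂, hd₂⟩ | ⟨p₂, c₂, q₂, hd₂, hc₂⟩
        · -- e₂ top, e₁ deep
          have hj₁a : ¬ j₁ = i₂ := fun h => han (h ▸ edge_snd_memAux cs h1)
          rw [if_neg hj₁a]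
          exact (mainTI hnd hd₂ hd₁ hc₁ hne.symm).symm
        · -- both deep
          have hi₁ : i₁ ∈ labels c₁ := edge_fst_mem c₁ hc₁
          have hi₂ : i₂ ∈ labels c₂ := edge_fst_mem c₂ hc₂
          have hj₁c : j₁ ∈ labels c₁ := mem_labels_of_children (edge_snd_mem c₁ hc₁)
          have hj₂c : j₂ ∈ labels c₂ := mem_labels_of_children (edge_snd_mem c₂ hc₂)
          rcases Nat.lt_trichotomy p₁.length p₂.length with hlt | heq | hgt
          · obtain ⟨mid, hm1, hm2⟩ := two_split hd₁ hd₂ hlt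
            have hcs : cs = p₁ ++ c₁ :: (mid ++ c₂ :: q₂) := by rw [hd₁, hm2]
            have hsp := nodup_split (hcs ▸ ndcs)
            have hdisj : ∀ x ∈ labels c₁, x ∉ labels c₂ := fun x hx hx2 =>
              (hsp.2.2.2.1 x hx).2 (mem_labelsList_of_mem (by simp) hx2)
            rw [if_neg (fun (h : j₂ = i₁) => hdisj i₁ hi₁ (h ▸ hj₂c)),
              if_neg (fun (h : j₁ = i₂) => hdisj j₁ hj₁c (h ▸ hi₂))]
            rw [hcs] at hnd ⊢
            exact caseIIdiff p₁ mid q₂ c₁ c₂ hc₁ hc₂ hnd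
          · rw [hd₁] at hd₂
            obtain ⟨hp, hq⟩ := List.append_inj hd₂ heq
            obtain ⟨hc, hqq⟩ := List.cons_eq_cons.mp hq
            subst hc
            -- both edges inside the same child c₁
            have hsp := nodup_split (hd₁ ▸ ndcs)
            have ndc : (labels c₁).Nodup := hsp.1
            have hj₁r : j₁ ≠ rootLabel c₁ := ne_root_of_deep ndc (edge_snd_mem c₁ hc₁)
            have hj₂r : j₂ ≠ rootLabel c₁ := ne_root_of_deep ndc (edge_snd_mem c₁ hc₂)
            have ht₂mem : (if j₂ = i₁ then j₁ else j₂) ∈ labels c₁ := by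
              split_ifs; exacts [hj₁c, hj₂c]
            have ht₁mem : (if j₁ = i₂ then j₂ else j₁) ∈ labels c₁ := by
              split_ifs; exacts [hj₂c, hj₁c]
            have hf1 : findSplit j₁ (p₁ ++ c₁ :: q₁) = none := by
              refine findSplit_eq_none fun x hx => ?_
              rcases List.mem_append.1 hx with h | h
              · exact roots_ne (fun hh => (hsp.2.2.2.1 j₁ hj₁c).1 hh) x h
              rcases List.mem_cons.1 h with rfl | h
              · exact fun hh => hj₁r hh.symm
              · exact roots_ne (fun hh => (hsp.2.2.2.1 j₁ hj₁c).2 hh) x h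
            have hf2 : findSplit j₂ (p₁ ++ c₁ :: q₁) = none := by
              refine findSplit_eq_none fun x hx => ?_
              rcases List.mem_append.1 hx with h | h
              · exact roots_ne (fun hh => (hsp.2.2.2.1 j₂ hj₂c).1 hh) x h
              rcases List.mem_cons.1 h with rfl | h
              · exact fun hh => hj₂r hh.symm
              · exact roots_ne (fun hh => (hsp.2.2.2.1 j₂ hj₂c).2 hh) x h
            have hroot1 : rootLabel (phi j₁ c₁) ≠ (if j₂ = i₁ then j₁ else j₂) := by
              by_cases hcase : j₂ = i₁
              · rw [if_pos hcase, root_phi_of_ne ndc hc₁ (fun hh => hj₂r (hcase ▸ hh ▸ rfl))]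
                simpa using fun hh => hj₁r hh.symm
              · rw [if_neg hcase]
                rcases rootLabel_phi j₁ c₁ with h | h
                · rw [h]; exact fun hh => hne hh
                · rw [h]; exact fun hh => hj₂r hh.symm
            have hroot2 : rootLabel (phi j₂ c₁) ≠ (if j₁ = i₂ then j₂ else j₁) := by
              by_cases hcase : j₁ = i₂
              · rw [if_pos hcase, root_phi_of_ne ndc hc₂ (fun hh => hj₁r (hcase ▸ hh ▸ rfl))]
                simpa using fun hh => hj₂r hh.symm
              · rw [if_neg hcase]
                rcases rootLabel_phi j₂ c₁ with h | h
                · rw [h]; exact fun hh => hne hh.symm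
                · rw [h]; exact fun hh => hj₁r hh.symm
            have hg1 : findSplit (if j₂ = i₁ then j₁ else j₂) (p₁ ++ phi j₁ c₁ :: q₁)
                = none := by
              refine findSplit_eq_none fun x hx => ?_
              rcases List.mem_append.1 hx with h | h
              · exact roots_ne (fun hh => (hsp.2.2.2.1 _ ht₂mem).1 hh) x h
              rcases List.mem_cons.1 h with rfl | h
              · exact hroot1
              · exact roots_ne (fun hh => (hsp.2.2.2.1 _ ht₂mem).2 hh) x h
            have hg2 : findSplit (if j₁ = i₂ then j₂ else j₁) (p₁ ++ phi j₂ c₁ :: q₁)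
                = none := by
              refine findSplit_eq_none fun x hx => ?_
              rcases List.mem_append.1 hx with h | h
              · exact roots_ne (fun hh => (hsp.2.2.2.1 _ ht₁mem).1 hh) x h
              rcases List.mem_cons.1 h with rfl | h
              · exact hroot2
              · exact roots_ne (fun hh => (hsp.2.2.2.1 _ ht₁mem).2 hh) x h
            rw [hd₁]
            rw [phi_node_of_none hf1, phi_node_of_none hf2,
              phiList_seg c₁ (fun hh => (hsp.2.2.2.1 j₁ hj₁c).1 hh)
                (fun hh => (hsp.2.2.2.1 j₁ hj₁c).2 hh),
              phiList_seg c₁ (fun hh => (hsp.2.2.2.1 j₂ hj₂c).1 hh)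
                (fun hh => (hsp.2.2.2.1 j₂ hj₂c).2 hh),
              phi_node_of_none hg1, phi_node_of_none hg2,
              phiList_seg (phi j₁ c₁) (fun hh => (hsp.2.2.2.1 _ ht₂mem).1 hh)
                (fun hh => (hsp.2.2.2.1 _ ht₂mem).2 hh),
              phiList_seg (phi j₂ c₁) (fun hh => (hsp.2.2.2.1 _ ht₁mem).1 hh)
                (fun hh => (hsp.2.2.2.1 _ ht₁mem).2 hh)]
            have hsize : sizeOf c₁ ≤ n := by
              have := sizeOf_lt_of_mem_children (a := a) (hd₁ ▸ (by simp : c₁ ∈ p₁ ++ c₁ :: q₁))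
              omega
            rw [ih c₁ hsize ndc hc₁ hc₂ hne]
          · obtain ⟨mid, hm1, hm2⟩ := two_split hd₂ hd₁ hgt
            have hcs : cs = p₂ ++ c₂ :: (mid ++ c₁ :: q₁) := by rw [hd₂, hm2]
            have hsp := nodup_split (hcs ▸ ndcs)
            have hdisj : ∀ x ∈ labels c₂, x ∉ labels c₁ := fun x hx hx2 =>
              (hsp.2.2.2.1 x hx).2 (mem_labelsList_of_mem (by simp) hx2)
            rw [if_neg (fun (h : j₂ = i₁) => hdisj j₂ hj₂c (h ▸ hi₁)),
              if_neg (fun (h : j₁ = i₂) => hdisj i₂ hi₂ (h ▸ hj₁c))]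
            rw [hcs] at hnd ⊢
            exact (caseIIdiff p₂ mid q₁ c₂ c₁ hc₂ hc₁ hnd).symm

end LTree

/-- Proposition 2.2: the involutions `φ` commute.  Let `e₁ = (i₁, j₁)` and
`e₂ = (i₂, j₂)` be distinct edges (recorded as (parent, child) pairs) of a labeled
plane tree `T` with distinct labels.  In `φ_{e₁}(T)` the image of the edge `e₂`
has child endpoint `Equiv.swap i₁ j₁ j₂` (the edge `e₁` becomes `(j₁, i₁)`, so the
edge of `T` whose child endpoint was `i₁` acquires child endpoint `j₁`; all other
edges keep their child endpoints), and symmetrically for `φ_{e₂}(T)`.  Applying to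
each intermediate tree the map `φ` at the image of the other edge yields the same
tree: `φ_{e₂} φ_{e₁} (T) = φ_{e₁} φ_{e₂} (T)`. -/
theorem phi_commute (T : LTree) (hT : (LTree.labels T).Nodup)
    (i₁ j₁ i₂ j₂ : ℕ)
    (h₁ : (i₁, j₁) ∈ LTree.edgeList T) (h₂ : (i₂, j₂) ∈ LTree.edgeList T)
    (hne : (i₁, j₁) ≠ (i₂, j₂)) :
    LTree.phi (Equiv.swap i₁ j₁ j₂) (LTree.phi j₁ T)
      = LTree.phi (Equiv.swap i₂ j₂ j₁) (LTree.phi j₂ T) := by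
  have hj : j₁ ≠ j₂ := by
    intro h
    apply hne
    have hi := LTree.parent_unique (sizeOf T) T le_rfl hT h₁ (h.symm ▸ h₂)
    rw [hi, h]
  have key := LTree.mainAux (sizeOf T) T le_rfl hT h₁ h₂ hj
  have e1 : Equiv.swap i₁ j₁ j₂ = if j₂ = i₁ then j₁ else j₂ := by
    rw [Equiv.swap_apply_def]
    by_cases hc : j₂ = i₁
    · simp [hc]
    · simp [hc, hj.symm]
  have e2 : Equiv.swap i₂ j₂ j₁ = if j₁ = i₂ then j₂ else j₁ := by
    rw [Equiv.swap_apply_def]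
    by_cases hc : j₁ = i₂
    · simp [hc]
    · simp [hc, hj]
  rw [e1, e2]
  exact key
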